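/- arXiv:2312.13185 — 2 statements merged into one kernel-verified Lean document; each statement's English description precedes it below -/
import Mathlib

section
/- The two-column resource state built from U_T carries the code-space stabilizers of Eq. (17)/(21): for every N-qubit unitary T and every i = 1,…,N, the 2N-qubit state U_T (|+⟩^{⊗N} ⊗ |+⟩^{⊗N}) is a +1 eigenvector of both Z_i ⊗ (T Z_i T†) and X_i ⊗ (T X_i T†), where the first factor acts on the input register and the second on the output register. -/
open Matrix Complex
open scoped Kronecker Classical

noncomputable section

namespace QCA

/-- Computational-basis index set of an `N`-qubit register. -/
abbrev QIdx (N : ℕ) := Fin N → Fin 2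

/-- Operators (matrices) on an `N`-qubit register `(ℂ²)^{⊗N}`. -/
abbrev MatQ (N : ℕ) := Matrix (QIdx N) (QIdx N) ℂ

/-- Pauli X. -/
def Xg : Matrix (Fin 2) (Fin 2) ℂ := !![0, 1; 1, 0]

/-- Pauli Z. -/
def Zg : Matrix (Fin 2) (Fin 2) ℂ := !![1, 0; 0, -1]

/-- Pauli Y = i·X·Z. -/
def Yg : Matrix (Fin 2) (Fin 2) ℂ := Complex.I • (Xg * Zg)

/-- Hadamard gate. -/
def Hg : Matrix (Fin 2) (Fin 2) ℂ := (Real.sqrt 2 : ℂ)⁻¹ • !![1, 1; 1, -1]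

/-- Phase gate S = diag(1, i). -/
def Sg : Matrix (Fin 2) (Fin 2) ℂ := !![1, 0; 0, Complex.I]

/-- √X := H·S·H. -/
def sqrtXg : Matrix (Fin 2) (Fin 2) ℂ := Hg * Sg * Hg

/-- The ket |+⟩ = (|0⟩+|1⟩)/√2. -/
def ketPlus : Fin 2 → ℂ := fun _ => (Real.sqrt 2 : ℂ)⁻¹

/-- The bra ⟨+|. -/
def braPlus : Fin 2 → ℂ := fun a => star (ketPlus a)

/-- The product state |+⟩^{⊗ι}. -/
def ketPlusAll (ι : Type*) [Fintype ι] : (ι → Fin 2) → ℂ := fun s => ∏ i, ketPlus (s i)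

/-- Kronecker product of two vectors. -/
def kronVec {a b : Type*} (v : a → ℂ) (w : b → ℂ) : a × b → ℂ := fun p => v p.1 * w p.2

variable {ι : Type*} [Fintype ι] [DecidableEq ι]

/-- `op1 P i` acts as the one-qubit operator `P` on qubit `i` and as the identity elsewhere. -/
def op1 (P : Matrix (Fin 2) (Fin 2) ℂ) (i : ι) : Matrix (ι → Fin 2) (ι → Fin 2) ℂ :=
  fun s t => P (s i) (t i) * ∏ j ∈ Finset.univ.erase i, (if s j = t j then (1 : ℂ) else 0)

/-- Controlled-Z gate between qubits `i` and `j` (identity elsewhere). -/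
def cz2 (i j : ι) : Matrix (ι → Fin 2) (ι → Fin 2) ℂ :=
  Matrix.diagonal fun s => if s i = 1 ∧ s j = 1 then (-1 : ℂ) else 1

/-- The Z-rotation exp(iθ Z_i) on qubit `i`. -/
def rotZ (θ : ℝ) (i : ι) : Matrix (ι → Fin 2) (ι → Fin 2) ℂ :=
  NormedSpace.exp (((θ : ℂ) * Complex.I) • op1 Zg i)

/-- The layer ∏_{i=1}^{N} H_i of Hadamards on every site of a ring of `N` qubits. -/
def hadamardLayer (N : ℕ) : MatQ N := (List.ofFn fun i : Fin N => op1 Hg i).prod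

/-- The layer ∏_{i=1}^{N} CZ_{i,i+1} of controlled-Z gates on a ring of `N` qubits
(site indices mod `N`; the factors pairwise commute). -/
def czRing (N : ℕ) [NeZero N] : MatQ N := (List.ofFn fun i : Fin N => cz2 i (i + 1)).prod

/-- The layer ∏_{i=1}^{N} (√X)_i on a ring of `N` qubits. -/
def sqrtXLayer (N : ℕ) : MatQ N := (List.ofFn fun i : Fin N => op1 sqrtXg i).prod

/-- The cluster CQCA T_c = (∏ H_i)·(∏ CZ_{i,i+1}) on a ring of `N` qubits. -/
def Tc (N : ℕ) [NeZero N] : MatQ N := hadamardLayer N * czRing N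

/-- The periodic CQCA T̃_c = ∏ CZ_{i,i+1} on a ring of `N` qubits. -/
def Ttc (N : ℕ) [NeZero N] : MatQ N := czRing N

/-- The fractal CQCA T̂_c = (∏ H_i)·(∏ CZ_{i,i+1})·(∏ (√X)_i) on a ring of `N` qubits. -/
def Thc (N : ℕ) [NeZero N] : MatQ N := hadamardLayer N * czRing N * sqrtXLayer N

/-- Controlled-Z between input qubit `i` and output qubit `i` on a doubled register. -/
def czIO {N : ℕ} (i : Fin N) : Matrix (QIdx N × QIdx N) (QIdx N × QIdx N) ℂ :=
  Matrix.diagonal fun p => if p.1 i = 1 ∧ p.2 i = 1 then (-1 : ℂ) else 1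

/-- The unitary U_T = (1 ⊗ T)·(∏_i H_i^{(out)})·(∏_i CZ_{i,i}^{(in,out)}) of Eq. (16). -/
def UT {N : ℕ} (T : MatQ N) : Matrix (QIdx N × QIdx N) (QIdx N × QIdx N) ℂ :=
  ((1 : MatQ N) ⊗ₖ T) *
    (List.ofFn fun i : Fin N => (1 : MatQ N) ⊗ₖ op1 Hg i).prod *
    (List.ofFn fun i : Fin N => czIO i).prod

/-- Contraction of the input register with the product bra `⊗_i bra i`. -/
def contractIn {N : ℕ} (bra : Fin N → Fin 2 → ℂ) (v : QIdx N × QIdx N → ℂ) : QIdx N → ℂ :=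
  fun t => ∑ s : QIdx N, (∏ i, bra i (s i)) * v (s, t)

lemma diagonal_commute {α : Type*} [Fintype α] [DecidableEq α] (d e : α → ℂ) :
    Commute (Matrix.diagonal d) (Matrix.diagonal e) := by
  unfold Commute SemiconjBy
  have h : (fun i => d i * e i) = fun i => e i * d i := by funext x; ring
  rw [Matrix.diagonal_mul_diagonal, Matrix.diagonal_mul_diagonal, h]

lemma Zg_eq_diagonal : Zg = Matrix.diagonal ![1, -1] := by
  ext i j
  fin_cases i <;> fin_cases j <;> simp [Zg, Matrix.diagonal]

lemma op1_diagonal (d : Fin 2 → ℂ) (i : ι) :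
    op1 (Matrix.diagonal d) i = Matrix.diagonal (fun s => d (s i)) := by
  ext s t
  by_cases h : s = t
  · subst h
    simp [op1, Matrix.diagonal_apply_eq]
  · rw [Matrix.diagonal_apply_ne _ h]
    by_cases hi : s i = t i
    · obtain ⟨k, hk⟩ : ∃ k, s k ≠ t k := Function.ne_iff.mp h
      have hki : k ≠ i := by rintro rfl; exact hk hi
      have h0 : (if s k = t k then (1 : ℂ) else 0) = 0 := by simp [hk]
      unfold op1
      rw [Finset.prod_eq_zero (Finset.mem_erase.mpr ⟨hki, Finset.mem_univ k⟩) h0]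
      ring
    · unfold op1
      rw [Matrix.diagonal_apply_ne _ hi]
      ring

/-- The controlled-Z gate attached to an (undirected) edge `e`. -/
def czEdge {N : ℕ} (e : Sym2 (Fin N)) : MatQ N :=
  Matrix.diagonal fun s => if ∀ i ∈ e, s i = 1 then (-1 : ℂ) else 1

/-- The unitary ∏_{{i,j} ∈ E(G)} CZ_{i,j} preparing the graph state (the
factors pairwise commute, so the product over the edge set is well defined). -/
def graphUnitary {N : ℕ} (G : SimpleGraph (Fin N)) [DecidableRel G.Adj] : MatQ N :=
  G.edgeFinset.noncommProd czEdge (by intro a _ b _ _; exact diagonal_commute _ _)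

/-- The graph state |G⟩ = (∏_{{i,j} ∈ E(G)} CZ_{i,j}) |+⟩^{⊗N}. -/
def graphState {N : ℕ} (G : SimpleGraph (Fin N)) [DecidableRel G.Adj] : QIdx N → ℂ :=
  (graphUnitary G).mulVec (ketPlusAll (Fin N))

/-- The stabilizer generator K_v = X_v · ∏_{w ∈ N_G(v)} Z_w of the graph state
(the Z factors pairwise commute, so the product is well defined). -/
def stabGen {N : ℕ} (G : SimpleGraph (Fin N)) [DecidableRel G.Adj] (v : Fin N) : MatQ N :=
  op1 Xg v *
    (G.neighborFinset v).noncommProd (fun w => op1 Zg w)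
      (by
        intro a _ b _ _
        simp only [Function.onFun]
        rw [Zg_eq_diagonal, op1_diagonal, op1_diagonal]
        exact diagonal_commute _ _)



section TwoColumnAux

variable {ι : Type*} [Fintype ι] [DecidableEq ι]

/-- Matrix acting site-wise by `f i` on qubit `i`. -/
def locMat (f : ι → Matrix (Fin 2) (Fin 2) ℂ) : Matrix (ι → Fin 2) (ι → Fin 2) ℂ :=
  Matrix.of fun s t => ∏ i, f i (s i) (t i)

lemma locMat_mul (f g : ι → Matrix (Fin 2) (Fin 2) ℂ) :
    locMat f * locMat g = locMat (fun i => f i * g i) := by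
  ext s t
  simp only [locMat, Matrix.mul_apply, Matrix.of_apply]
  rw [Fintype.prod_sum (κ := fun _ => Fin 2) (fun i b => f i (s i) b * g i b (t i))]
  exact Finset.sum_congr rfl fun u _ => (Finset.prod_mul_distrib).symm

omit [DecidableEq ι] in
lemma locMat_one : locMat (fun _ : ι => (1 : Matrix (Fin 2) (Fin 2) ℂ)) = 1 := by
  ext s t
  by_cases h : s = t
  · subst h; simp [locMat, Matrix.one_apply]
  · obtain ⟨k, hk⟩ : ∃ k, s k ≠ t k := Function.ne_iff.mp h
    rw [Matrix.one_apply_ne h]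
    simp only [locMat, Matrix.of_apply]
    exact Finset.prod_eq_zero (Finset.mem_univ k) (by simp [Matrix.one_apply, hk])

lemma op1_eq_locMat (P : Matrix (Fin 2) (Fin 2) ℂ) (i : ι) :
    op1 P i = locMat (fun j => if j = i then P else 1) := by
  ext s t
  simp only [locMat, Matrix.of_apply, op1]
  rw [← Finset.mul_prod_erase Finset.univ _ (Finset.mem_univ i)]
  rw [if_pos rfl]
  congr 1
  refine Finset.prod_congr rfl fun j hj => ?_
  rw [if_neg (Finset.mem_erase.mp hj).1, Matrix.one_apply]

lemma op1_mul_same (P Q : Matrix (Fin 2) (Fin 2) ℂ) (i : ι) :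
    op1 P i * op1 Q i = op1 (P * Q) i := by
  rw [op1_eq_locMat, op1_eq_locMat, op1_eq_locMat, locMat_mul]
  exact congrArg locMat (funext fun j => by by_cases h : j = i <;> simp [h])

lemma op1_one (i : ι) : op1 (1 : Matrix (Fin 2) (Fin 2) ℂ) i = 1 := by
  rw [op1_eq_locMat]
  rw [show (fun j : ι => if j = i then (1 : Matrix (Fin 2) (Fin 2) ℂ) else 1)
      = fun _ : ι => (1 : Matrix (Fin 2) (Fin 2) ℂ) from funext fun j => ite_self _]
  exact locMat_one

lemma op1_transpose (P : Matrix (Fin 2) (Fin 2) ℂ) (i : ι) :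
    (op1 P i)ᵀ = op1 Pᵀ i := by
  ext s t
  simp only [Matrix.transpose_apply, op1]
  congr 1
  refine Finset.prod_congr rfl fun j _ => ?_
  by_cases h : s j = t j
  · rw [if_pos h, if_pos h.symm]
  · rw [if_neg h, if_neg fun e => h e.symm]

lemma prod_ofFn_ite {M : Type*} [Monoid M] {n : ℕ} (j : Fin n) (P : M) :
    (List.ofFn fun k : Fin n => if j = k then P else 1).prod = P := by
  induction n with
  | zero => exact j.elim0
  | succ n ih =>
    rw [List.ofFn_succ, List.prod_cons]
    refine Fin.cases ?_ (fun j' => ?_) j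
    · rw [if_pos rfl]
      have h1 : (List.ofFn fun k : Fin n => if (0 : Fin (n + 1)) = k.succ then P else 1).prod
          = 1 := by
        refine List.prod_eq_one fun x hx => ?_
        obtain ⟨k, rfl⟩ := List.mem_ofFn.mp hx
        exact if_neg (Fin.succ_ne_zero k).symm
      rw [h1, mul_one]
    · rw [if_neg (Fin.succ_ne_zero j'), one_mul]
      rw [show (fun k : Fin n => if j'.succ = k.succ then P else 1)
          = fun k : Fin n => if j' = k then P else 1 from
        funext fun k => by simp only [Fin.succ_inj]]
      exact ih j'

lemma locMat_listProd {n : ℕ} (f : Fin n → ι → Matrix (Fin 2) (Fin 2) ℂ) :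
    (List.ofFn fun k => locMat (f k)).prod
      = locMat (fun j => (List.ofFn fun k => f k j).prod) := by
  induction n with
  | zero =>
    simp only [List.ofFn_zero, List.prod_nil]
    exact locMat_one.symm
  | succ n ih =>
    rw [List.ofFn_succ, List.prod_cons, ih, locMat_mul]
    exact congrArg locMat (funext fun j => by rw [List.ofFn_succ, List.prod_cons])

lemma op1_prod_eq_locMat {n : ℕ} (P : Matrix (Fin 2) (Fin 2) ℂ) :
    (List.ofFn fun i : Fin n => op1 P i).prod = locMat (fun _ : Fin n => P) := by
  rw [show (List.ofFn fun i : Fin n => op1 P i)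
      = List.ofFn fun i : Fin n => locMat (fun j => if j = i then P else 1) from by
    congr 1; funext i; exact op1_eq_locMat P i]
  rw [locMat_listProd]
  exact congrArg locMat (funext fun j => prod_ofFn_ite j P)

lemma diag_ofFn_prod {α : Type*} [Fintype α] [DecidableEq α] {n : ℕ} (d : Fin n → α → ℂ) :
    (List.ofFn fun k => Matrix.diagonal (d k)).prod
      = Matrix.diagonal (fun a => ∏ k, d k a) := by
  induction n with
  | zero => simp
  | succ n ih =>
    rw [List.ofFn_succ, List.prod_cons, ih, Matrix.diagonal_mul_diagonal]
    exact congrArg Matrix.diagonal (funext fun a => by rw [Fin.prod_univ_succ])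

lemma kron_one_listProd {N : ℕ} (l : List (MatQ N)) :
    (l.map fun B => (1 : MatQ N) ⊗ₖ B).prod = (1 : MatQ N) ⊗ₖ l.prod := by
  induction l with
  | nil => simp [Matrix.one_kronecker_one]
  | cons a l ih =>
    rw [List.map_cons, List.prod_cons, ih, List.prod_cons, ← Matrix.mul_kronecker_mul, one_mul]

lemma ketPlusAll_apply {N : ℕ} (s : QIdx N) :
    ketPlusAll (Fin N) s = (Real.sqrt 2 : ℂ)⁻¹ ^ N := by
  simp [ketPlusAll, ketPlus, Finset.prod_const, Finset.card_univ]

/-- The (unnormalised) maximally-entangled two-column state. -/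
def phiVec (N : ℕ) : QIdx N × QIdx N → ℂ :=
  fun p => if p.1 = p.2 then (Real.sqrt 2 : ℂ)⁻¹ ^ N else 0

lemma sqrt2_mul_self : (Real.sqrt 2 : ℂ) * (Real.sqrt 2 : ℂ) = 2 := by
  rw [← Complex.ofReal_mul, Real.mul_self_sqrt (by norm_num : (0:ℝ) ≤ 2)]
  norm_num

lemma phi_eigen {N : ℕ} (A B : MatQ N) (h : A * Bᵀ = 1) :
    (A ⊗ₖ B).mulVec (phiVec N) = phiVec N := by
  have hst : ∀ s t : QIdx N, (∑ u, A s u * B t u) = if s = t then 1 else 0 := by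
    intro s t
    have h2 := congrFun (congrFun h s) t
    simpa [Matrix.mul_apply, Matrix.transpose_apply, Matrix.one_apply] using h2
  funext p
  obtain ⟨s, t⟩ := p
  show ∑ q : QIdx N × QIdx N, (A ⊗ₖ B) (s, t) q * phiVec N q = phiVec N (s, t)
  rw [Fintype.sum_prod_type]
  simp only [Matrix.kroneckerMap_apply, phiVec, mul_ite, mul_zero, Finset.sum_ite_eq,
    Finset.mem_univ, if_true]
  rw [← Finset.sum_mul, hst s t]
  by_cases hs : s = t <;> simp [hs]

lemma UT_mulVec_plus {N : ℕ} (T : MatQ N) :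
    (UT T).mulVec (kronVec (ketPlusAll (Fin N)) (ketPlusAll (Fin N)))
      = ((1 : MatQ N) ⊗ₖ T).mulVec (phiVec N) := by
  unfold UT
  rw [← Matrix.mulVec_mulVec, ← Matrix.mulVec_mulVec]
  have hHL : (List.ofFn fun i : Fin N => (1 : MatQ N) ⊗ₖ op1 Hg i).prod
      = (1 : MatQ N) ⊗ₖ locMat (fun _ : Fin N => Hg) := by
    rw [show (List.ofFn fun i : Fin N => (1 : MatQ N) ⊗ₖ op1 Hg i)
        = (List.ofFn fun i : Fin N => op1 Hg i).map (fun B => (1 : MatQ N) ⊗ₖ B) from by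
      rw [List.map_ofFn]; rfl]
    rw [kron_one_listProd, op1_prod_eq_locMat]
  have hCZ : (List.ofFn fun i : Fin N => czIO i).prod
      = Matrix.diagonal (fun p : QIdx N × QIdx N =>
          ∏ i, if p.1 i = 1 ∧ p.2 i = 1 then (-1 : ℂ) else 1) := by
    rw [show (List.ofFn fun i : Fin N => czIO i)
        = List.ofFn fun i : Fin N => Matrix.diagonal
            (fun p : QIdx N × QIdx N => if p.1 i = 1 ∧ p.2 i = 1 then (-1 : ℂ) else 1) from rfl]
    exact diag_ofFn_prod _
  rw [hHL, hCZ]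
  refine congrArg (fun v => ((1 : MatQ N) ⊗ₖ T).mulVec v) ?_
  have hw : (Matrix.diagonal (fun p : QIdx N × QIdx N =>
        ∏ i, if p.1 i = 1 ∧ p.2 i = 1 then (-1 : ℂ) else 1)) *ᵥ
        (kronVec (ketPlusAll (Fin N)) (ketPlusAll (Fin N)))
      = fun q : QIdx N × QIdx N => (∏ i, if q.1 i = 1 ∧ q.2 i = 1 then (-1 : ℂ) else 1) *
          ((Real.sqrt 2 : ℂ)⁻¹ ^ N * (Real.sqrt 2 : ℂ)⁻¹ ^ N) := by
    funext q
    rw [Matrix.mulVec_diagonal]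
    congr 1
    simp [kronVec, ketPlusAll_apply]
  rw [hw]
  funext p
  obtain ⟨s, t⟩ := p
  show ∑ q : QIdx N × QIdx N, ((1 : MatQ N) ⊗ₖ locMat fun _ : Fin N => Hg) (s, t) q *
      ((∏ i, if q.1 i = 1 ∧ q.2 i = 1 then (-1 : ℂ) else 1) *
        ((Real.sqrt 2 : ℂ)⁻¹ ^ N * (Real.sqrt 2 : ℂ)⁻¹ ^ N)) = phiVec N (s, t)
  rw [Fintype.sum_prod_type]
  simp only [Matrix.kroneckerMap_apply, Matrix.one_apply, locMat, Matrix.of_apply,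
    ite_mul, one_mul, zero_mul]
  rw [Finset.sum_comm]
  simp only [Finset.sum_ite_eq, Finset.mem_univ, if_true]
  have hsite : ∀ a b : Fin 2,
      (∑ u : Fin 2, Hg b u * (if a = 1 ∧ u = 1 then (-1 : ℂ) else 1))
        = if a = b then 2 * (Real.sqrt 2 : ℂ)⁻¹ else 0 := by
    intro a b
    fin_cases a <;> fin_cases b <;> simp [Hg, Fin.sum_univ_two] <;> try ring
  have hcc : (Real.sqrt 2 : ℂ)⁻¹ * (Real.sqrt 2 : ℂ)⁻¹ = (2 : ℂ)⁻¹ := by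
    rw [← mul_inv, sqrt2_mul_self]
  calc ∑ v : QIdx N, (∏ i, Hg (t i) (v i)) *
          ((∏ i, if s i = 1 ∧ v i = 1 then (-1 : ℂ) else 1) *
            ((Real.sqrt 2 : ℂ)⁻¹ ^ N * (Real.sqrt 2 : ℂ)⁻¹ ^ N))
      = (∑ v : QIdx N, ∏ i, Hg (t i) (v i) *
          (if s i = 1 ∧ v i = 1 then (-1 : ℂ) else 1)) *
            ((Real.sqrt 2 : ℂ)⁻¹ ^ N * (Real.sqrt 2 : ℂ)⁻¹ ^ N) := by
        rw [Finset.sum_mul]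
        refine Finset.sum_congr rfl fun v _ => ?_
        rw [Finset.prod_mul_distrib, mul_assoc]
    _ = (∏ i, ∑ u : Fin 2, Hg (t i) u * (if s i = 1 ∧ u = 1 then (-1 : ℂ) else 1))
          * ((Real.sqrt 2 : ℂ)⁻¹ ^ N * (Real.sqrt 2 : ℂ)⁻¹ ^ N) := by
        rw [Fintype.prod_sum (κ := fun _ => Fin 2)
          (fun i u => Hg (t i) u * (if s i = 1 ∧ u = 1 then (-1 : ℂ) else 1))]
    _ = (∏ i, if s i = t i then 2 * (Real.sqrt 2 : ℂ)⁻¹ else 0)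
          * ((Real.sqrt 2 : ℂ)⁻¹ ^ N * (Real.sqrt 2 : ℂ)⁻¹ ^ N) := by
        rw [Finset.prod_congr rfl fun i _ => hsite (s i) (t i)]
    _ = phiVec N (s, t) := by
        by_cases hs : s = t
        · subst hs
          simp only [phiVec, eq_self_iff_true, if_true, Finset.prod_const,
            Finset.card_univ, Fintype.card_fin]
          rw [← mul_pow, ← mul_pow]
          congr 1
          linear_combination (2 : ℂ) * (Real.sqrt 2 : ℂ)⁻¹ * hcc
        · obtain ⟨k, hk⟩ : ∃ k, s k ≠ t k := Function.ne_iff.mp hs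
          rw [Finset.prod_eq_zero (Finset.mem_univ k)
            (show (if s k = t k then 2 * (Real.sqrt 2 : ℂ)⁻¹ else 0) = 0 from if_neg hk),
            zero_mul]
          simp [phiVec, hs]

lemma stab_aux {N : ℕ} (T : MatQ N) (hT : T ∈ Matrix.unitaryGroup (QIdx N) ℂ) (i : Fin N)
    (P : Matrix (Fin 2) (Fin 2) ℂ) (hPt : Pᵀ = P) (hP2 : P * P = 1) :
    (op1 P i ⊗ₖ (T * op1 P i * Tᴴ)).mulVec
        ((UT T).mulVec (kronVec (ketPlusAll (Fin N)) (ketPlusAll (Fin N)))) =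
      (UT T).mulVec (kronVec (ketPlusAll (Fin N)) (ketPlusAll (Fin N))) := by
  rw [UT_mulVec_plus, Matrix.mulVec_mulVec]
  have hTT : Tᴴ * T = 1 := by
    have h1 := hT.1
    rwa [Matrix.star_eq_conjTranspose] at h1
  have hmat : (op1 P i ⊗ₖ (T * op1 P i * Tᴴ)) * ((1 : MatQ N) ⊗ₖ T)
      = ((1 : MatQ N) ⊗ₖ T) * (op1 P i ⊗ₖ op1 P i) := by
    rw [← Matrix.mul_kronecker_mul, ← Matrix.mul_kronecker_mul, mul_one, one_mul,
      mul_assoc (T * op1 P i), hTT, mul_one]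
  have hPP : op1 P i * (op1 P i)ᵀ = 1 := by
    rw [op1_transpose, hPt, op1_mul_same, hP2, op1_one]
  rw [hmat, ← Matrix.mulVec_mulVec, phi_eigen _ _ hPP]

lemma Zg_facts : Zgᵀ = Zg ∧ Zg * Zg = 1 := by
  constructor
  · ext a b; fin_cases a <;> fin_cases b <;> simp [Zg]
  · ext a b; fin_cases a <;> fin_cases b <;>
      simp [Zg, Matrix.mul_apply, Fin.sum_univ_two, Matrix.one_apply]

lemma Xg_facts : Xgᵀ = Xg ∧ Xg * Xg = 1 := by
  constructor
  · ext a b; fin_cases a <;> fin_cases b <;> simp [Xg]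
  · ext a b; fin_cases a <;> fin_cases b <;>
      simp [Xg, Matrix.mul_apply, Fin.sum_univ_two, Matrix.one_apply]

end TwoColumnAux

/-- the two-column resource state `U_T(|+⟩^{⊗N} ⊗ |+⟩^{⊗N})` is a +1
eigenvector of `Z_i ⊗ (T Z_i T†)` and of `X_i ⊗ (T X_i T†)`. -/
theorem two_column_stabilizers {N : ℕ} (T : MatQ N)
    (hT : T ∈ Matrix.unitaryGroup (QIdx N) ℂ) (i : Fin N) :
    (op1 Zg i ⊗ₖ (T * op1 Zg i * Tᴴ)).mulVec
        ((UT T).mulVec (kronVec (ketPlusAll (Fin N)) (ketPlusAll (Fin N)))) =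
      (UT T).mulVec (kronVec (ketPlusAll (Fin N)) (ketPlusAll (Fin N))) ∧
    (op1 Xg i ⊗ₖ (T * op1 Xg i * Tᴴ)).mulVec
        ((UT T).mulVec (kronVec (ketPlusAll (Fin N)) (ketPlusAll (Fin N)))) =
      (UT T).mulVec (kronVec (ketPlusAll (Fin N)) (ketPlusAll (Fin N))) := by
  exact ⟨stab_aux T hT i Zg Zg_facts.1 Zg_facts.2, stab_aux T hT i Xg Xg_facts.1 Xg_facts.2⟩

end QCA

end
end

section
/- Resource state of a CQCA with T(Z_i) = Z_i (the case excluded in Theorem 3, yielding GHZ-type correlations): let N ≥ 3, D ≥ 1, T̃_c := ∏_{i=1}^{N} CZ_{i,i+1} on a ring of N qubits, and arrange N(D+1) qubits in columns j = 1,…,D+1, each column a ring of N qubits. Then the state |Ψ⟩ := (∏_{j=D,…,1} U_{T̃_c}^{(j,j+1)}) |+⟩^{⊗N(D+1)}, where U_{T̃_c}^{(j,j+1)} is the unitary U_T with T = T̃_c acting on columns j (as input) and j+1 (as output), applied from right to left in order j = 1,…,D, is a +1 eigenvector of Z_i^{(j)} Z_i^{(j+1)} for every i = 1,…,N and every j =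 1,…,D. -/
open Matrix Complex
open scoped Kronecker Classical

noncomputable section

namespace QCA

variable {ι : Type*} [Fintype ι] [DecidableEq ι]

/-- Sites of an `N × (D+1)` grid of qubits: row `i : Fin N`, column `j : Fin (D+1)`. -/
abbrev GIdx (N D : ℕ) := Fin N × Fin (D + 1)

/-- Operators on the grid of `N × (D+1)` qubits. -/
abbrev MatG (N D : ℕ) := Matrix (GIdx N D → Fin 2) (GIdx N D → Fin 2) ℂ

/-- The periodic CQCA `T̃_c = ∏_i CZ_{i,i+1}` acting on column `j` of the grid. -/
def TtcCol {N D : ℕ} [NeZero N] (j : Fin (D + 1)) : MatG N D :=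
  (List.ofFn fun i : Fin N => cz2 ((i, j) : GIdx N D) ((i + 1, j) : GIdx N D)).prod

/-- The unitary `U_{T̃_c}^{(j,j+1)}` acting on columns `j` (input) and `j+1` (output). -/
def UTtcPair {N D : ℕ} [NeZero N] (j : Fin D) : MatG N D :=
  TtcCol j.succ *
    (List.ofFn fun i : Fin N => op1 Hg ((i, j.succ) : GIdx N D)).prod *
    (List.ofFn fun i : Fin N => cz2 ((i, j.castSucc) : GIdx N D) ((i, j.succ) : GIdx N D)).prod

/-- The resource state `|Ψ⟩ = (∏_{j=D,…,1} U_{T̃_c}^{(j,j+1)}) |+⟩^{⊗N(D+1)}`. -/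
def ghzResourceState (N D : ℕ) [NeZero N] : (GIdx N D → Fin 2) → ℂ :=
  ((List.ofFn fun j : Fin D => UTtcPair (N := N) (D := D) j).reverse.prod).mulVec
    (ketPlusAll (GIdx N D))

-- ### Fin 2 arithmetic
lemma fin2_succ_ne : ∀ a : Fin 2, a + 1 ≠ a := by decide
lemma fin2_aoa : ∀ a : Fin 2, a + 1 + 1 = a := by decide
lemma fin2_eq_add_one_of_ne : ∀ (a b : Fin 2), a ≠ b → b = a + 1 := by decide
lemma fin2_cases : ∀ a : Fin 2, a = 0 ∨ a = 1 := by decide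

lemma fin2_0p1 : (0 : Fin 2) + 1 = 1 := rfl
lemma fin2_1p1 : (1 : Fin 2) + 1 = 0 := rfl

lemma Xg_apply_add_one (a : Fin 2) : Xg a (a + 1) = 1 := by
  fin_cases a <;> simp [Xg, fin2_0p1, fin2_1p1]
lemma Xg_apply_self (a : Fin 2) : Xg a a = 0 := by
  fin_cases a <;> simp [Xg]

def zfun (a : Fin 2) : ℂ := if a = 1 then -1 else 1

lemma zfun_sq (a : Fin 2) : zfun a * zfun a = 1 := by
  fin_cases a <;> norm_num [zfun]

lemma zfun_Hg (a b : Fin 2) : zfun a * Hg a b = Hg a (b + 1) := by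
  fin_cases a <;> fin_cases b <;> simp [zfun, Hg, fin2_0p1, fin2_1p1] <;> ring

-- ### basic op1 facts
lemma op1_zero_of_ne (P : Matrix (Fin 2) (Fin 2) ℂ) (q : ι) {s t : ι → Fin 2} {k : ι}
    (hk : k ≠ q) (h : s k ≠ t k) : op1 P q s t = 0 := by
  unfold op1
  have hz : (∏ j ∈ Finset.univ.erase q, if s j = t j then (1 : ℂ) else 0) = 0 :=
    Finset.prod_eq_zero (Finset.mem_erase.mpr ⟨hk, Finset.mem_univ k⟩) (if_neg h)
  rw [hz, mul_zero]

lemma op1_offdiag_agree {P : Matrix (Fin 2) (Fin 2) ℂ} {q : ι} {s t : ι → Fin 2}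
    (h : op1 P q s t ≠ 0) : ∀ k, k ≠ q → s k = t k := by
  intro k hk
  by_contra hne
  exact h (op1_zero_of_ne P q hk hne)

lemma op1Xg_apply (q : ι) (s t : ι → Fin 2) :
    op1 Xg q s t = if t = Function.update s q (s q + 1) then 1 else 0 := by
  split_ifs with h
  · subst h
    unfold op1
    rw [Function.update_self, Xg_apply_add_one, one_mul]
    apply Finset.prod_eq_one
    intro k hk
    rw [Function.update_of_ne (Finset.mem_erase.mp hk).1, if_pos rfl]
  · by_cases hoff : ∀ k, k ≠ q → s k = t k
    · have hq : t q = s q := by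
        by_contra hq
        apply h
        funext k
        by_cases hk : k = q
        · subst hk
          rw [Function.update_self]
          exact fin2_eq_add_one_of_ne _ _ (fun he => hq he.symm)
        · rw [Function.update_of_ne hk]
          exact (hoff k hk).symm
      unfold op1
      rw [hq, Xg_apply_self, zero_mul]
    · push_neg at hoff
      obtain ⟨k, hk, hne⟩ := hoff
      exact op1_zero_of_ne Xg q hk hne

lemma update_flip_flip (s : ι → Fin 2) (q : ι) :
    Function.update (Function.update s q (s q + 1)) q
      ((Function.update s q (s q + 1)) q + 1) = s := by
  rw [Function.update_self, Function.update_idem, fin2_aoa, Function.update_eq_self]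

lemma op1Xg_mul_apply (q : ι) (M : Matrix (ι → Fin 2) (ι → Fin 2) ℂ) (s t : ι → Fin 2) :
    (op1 Xg q * M) s t = M (Function.update s q (s q + 1)) t := by
  rw [Matrix.mul_apply]
  simp only [op1Xg_apply, ite_mul, one_mul, zero_mul]
  rw [Finset.sum_ite_eq' Finset.univ (Function.update s q (s q + 1)) (fun u => M u t)]
  simp

lemma mul_op1Xg_apply (q : ι) (M : Matrix (ι → Fin 2) (ι → Fin 2) ℂ) (s t : ι → Fin 2) :
    (M * op1 Xg q) s t = M s (Function.update t q (t q + 1)) := by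
  rw [Matrix.mul_apply]
  have key : ∀ u : ι → Fin 2,
      (t = Function.update u q (u q + 1)) ↔ (u = Function.update t q (t q + 1)) := by
    intro u
    constructor
    · rintro rfl
      exact (update_flip_flip u q).symm
    · rintro rfl
      exact (update_flip_flip t q).symm
  simp only [op1Xg_apply, key, mul_ite, mul_one, mul_zero]
  rw [Finset.sum_ite_eq' Finset.univ (Function.update t q (t q + 1)) (fun u => M s u)]
  simp

-- commuting op1 with an invariant diagonal
lemma op1_comm_diagonal (P : Matrix (Fin 2) (Fin 2) ℂ) (q : ι) (d : (ι → Fin 2) → ℂ)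
    (hd : ∀ (s : ι → Fin 2) (b : Fin 2), d (Function.update s q b) = d s) :
    op1 P q * Matrix.diagonal d = Matrix.diagonal d * op1 P q := by
  ext s t
  rw [Matrix.mul_diagonal, Matrix.diagonal_mul]
  by_cases h : op1 P q s t = 0
  · rw [h, zero_mul, mul_zero]
  · have hst : s = Function.update t q (s q) := by
      funext k
      by_cases hk : k = q
      · subst hk; rw [Function.update_self]
      · rw [Function.update_of_ne hk]; exact op1_offdiag_agree h k hk
    have : d s = d t := by rw [hst, hd]
    rw [this, mul_comm]

lemma op1Xg_mul_diagonal (q : ι) (d : (ι → Fin 2) → ℂ) :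
    op1 Xg q * Matrix.diagonal d
      = Matrix.diagonal (fun s => d (Function.update s q (s q + 1))) * op1 Xg q := by
  ext s t
  rw [Matrix.mul_diagonal, Matrix.diagonal_mul, op1Xg_apply]
  by_cases h : t = Function.update s q (s q + 1)
  · subst h; simp
  · simp [h]

lemma op1Xg_comm_op1 (P : Matrix (Fin 2) (Fin 2) ℂ) {q q' : ι} (h : q ≠ q') :
    op1 Xg q * op1 P q' = op1 P q' * op1 Xg q := by
  ext s t
  rw [op1Xg_mul_apply, mul_op1Xg_apply]
  unfold op1
  rw [Function.update_of_ne (Ne.symm h), Function.update_of_ne (Ne.symm h)]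
  congr 1
  apply Finset.prod_congr rfl
  intro k hk
  by_cases hkq : k = q
  · subst hkq
    rw [Function.update_self, Function.update_self]
    congr 1
    rw [show (s k + 1 = t k) ↔ (s k = t k + 1) from
      ⟨fun hh => by rw [← hh, fin2_aoa], fun hh => by rw [hh, fin2_aoa]⟩]
  · rw [Function.update_of_ne hkq, Function.update_of_ne hkq]


lemma Zdiag_mul_op1Hg (q : ι) :
    (Matrix.diagonal fun s : ι → Fin 2 => zfun (s q)) * op1 Hg q = op1 Hg q * op1 Xg q := by
  ext s t
  rw [Matrix.diagonal_mul, mul_op1Xg_apply]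
  unfold op1
  rw [Function.update_self, ← mul_assoc, zfun_Hg]
  congr 1
  apply Finset.prod_congr rfl
  intro k hk
  rw [Function.update_of_ne (Finset.mem_erase.mp hk).1]

lemma op1Xg_mul_cz2 {q1 q2 : ι} (h : q1 ≠ q2) :
    op1 Xg q2 * cz2 q1 q2
      = cz2 q1 q2 * ((Matrix.diagonal fun s : ι → Fin 2 => zfun (s q1)) * op1 Xg q2) := by
  unfold cz2
  rw [op1Xg_mul_diagonal, ← mul_assoc, Matrix.diagonal_mul_diagonal]
  refine congrArg (· * op1 Xg q2) (congrArg Matrix.diagonal ?_)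
  funext s
  rw [Function.update_of_ne h, Function.update_self]
  rcases fin2_cases (s q1) with h1 | h1 <;> rcases fin2_cases (s q2) with h2 | h2 <;>
    simp [h1, h2, zfun, fin2_0p1, fin2_1p1]

lemma zdiag_sq (q : ι) :
    (Matrix.diagonal fun s : ι → Fin 2 => zfun (s q)) *
      (Matrix.diagonal fun s : ι → Fin 2 => zfun (s q)) = 1 := by
  rw [Matrix.diagonal_mul_diagonal]
  have : (fun s : ι → Fin 2 => zfun (s q) * zfun (s q)) = fun _ => 1 :=
    funext fun s => zfun_sq (s q)
  rw [this]
  simp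

-- diagonal d commutes with cz2 always
lemma diag_comm_cz2 (d : (ι → Fin 2) → ℂ) (a b : ι) :
    Commute (Matrix.diagonal d) (cz2 a b) := by
  unfold cz2 Commute SemiconjBy
  rw [Matrix.diagonal_mul_diagonal, Matrix.diagonal_mul_diagonal]
  refine congrArg Matrix.diagonal ?_
  funext s
  ring

lemma op1_comm_cz2 (P : Matrix (Fin 2) (Fin 2) ℂ) {q a b : ι} (ha : q ≠ a) (hb : q ≠ b) :
    op1 P q * cz2 a b = cz2 a b * op1 P q := by
  unfold cz2
  apply op1_comm_diagonal
  intro s v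
  rw [Function.update_of_ne (Ne.symm ha), Function.update_of_ne (Ne.symm hb)]

-- ### the list semiconjugation lemma
lemma semiconj_ofFn_prod {M : Type*} [Monoid M] {n : ℕ} (f : Fin n → M) (a b : M) (i : Fin n)
    (h1 : ∀ k : Fin n, k < i → a * f k = f k * a)
    (h2 : a * f i = f i * b)
    (h3 : ∀ k : Fin n, i < k → b * f k = f k * b) :
    a * (List.ofFn f).prod = (List.ofFn f).prod * b := by
  have hlen : (List.ofFn f).length = n := List.length_ofFn (f := f)
  have hi : (i : ℕ) < (List.ofFn f).length := by rw [hlen]; exact i.isLt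
  have hget : (List.ofFn f)[(i : ℕ)]'hi = f i := by
    rw [List.getElem_ofFn]
  have hsplit : List.ofFn f
      = (List.ofFn f).take i ++ f i :: (List.ofFn f).drop (i + 1) := by
    conv_lhs => rw [← List.take_append_drop i (List.ofFn f)]
    congr 1
    rw [List.drop_eq_getElem_cons hi, hget]
  have ha : a * ((List.ofFn f).take i).prod = ((List.ofFn f).take i).prod * a := by
    refine Commute.list_prod_right _ _ ?_
    intro x hx
    obtain ⟨m, hm, hx⟩ := List.getElem_of_mem hx
    have hm' : m < (i : ℕ) := by
      have := hm
      simp only [List.length_take, hlen] at this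
      omega
    have hx' : x = f ⟨m, lt_trans hm' i.isLt⟩ := by
      rw [← hx, List.getElem_take, List.getElem_ofFn]
    rw [hx']
    exact h1 ⟨m, _⟩ hm'
  have hb : b * ((List.ofFn f).drop (i + 1)).prod
      = ((List.ofFn f).drop (i + 1)).prod * b := by
    refine Commute.list_prod_right _ _ ?_
    intro x hx
    obtain ⟨m, hm, hx⟩ := List.getElem_of_mem hx
    have hm2 : (i : ℕ) + 1 + m < n := by
      have := hm
      simp only [List.length_drop, hlen] at this
      omega
    have hx' : x = f ⟨(i : ℕ) + 1 + m, hm2⟩ := by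
      rw [← hx, List.getElem_drop, List.getElem_ofFn]
    rw [hx']
    refine h3 _ ?_
    simp only [Fin.lt_def]
    omega
  conv_lhs => rw [hsplit]
  conv_rhs => rw [hsplit]
  rw [List.prod_append, List.prod_cons]
  set T := ((List.ofFn f).take i).prod
  set Dr := ((List.ofFn f).drop (i + 1)).prod
  calc a * (T * (f i * Dr))
      = (a * T) * (f i * Dr) := by rw [mul_assoc]
    _ = (T * a) * (f i * Dr) := by rw [ha]
    _ = T * ((a * f i) * Dr) := by rw [mul_assoc, ← mul_assoc a]
    _ = T * ((f i * b) * Dr) := by rw [h2]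
    _ = T * (f i * (b * Dr)) := by rw [mul_assoc]
    _ = T * (f i * (Dr * b)) := by rw [hb]
    _ = (T * (f i * Dr)) * b := by
        rw [← mul_assoc, ← mul_assoc, mul_assoc T]


lemma op1_Zg_eq (q : ι) : op1 Zg q = Matrix.diagonal fun s => zfun (s q) := by
  rw [Zg_eq_diagonal, op1_diagonal]
  refine congrArg Matrix.diagonal (funext fun s => ?_)
  rcases fin2_cases (s q) with h | h <;> rw [h] <;> simp [zfun]

lemma op1Xg_mulVec_ketPlusAll (q : ι) :
    (op1 Xg q).mulVec (ketPlusAll ι) = ketPlusAll ι := by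
  funext t
  show (∑ s : ι → Fin 2, op1 Xg q t s * ketPlusAll ι s) = ketPlusAll ι t
  simp only [op1Xg_apply, ite_mul, one_mul, zero_mul]
  rw [Finset.sum_ite_eq' Finset.univ (Function.update t q (t q + 1))
    (fun s => ketPlusAll ι s)]
  simp only [Finset.mem_univ, if_true]
  rfl

lemma conj_step {M : Type*} [Semigroup M] {a b c m1 m2 : M}
    (h1 : a * m1 = m1 * b) (h2 : b * m2 = m2 * c) :
    a * (m1 * m2) = (m1 * m2) * c := by
  rw [← mul_assoc, h1, mul_assoc, h2, ← mul_assoc]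

lemma comm_pair {M : Type*} [Semigroup M] {a b m : M}
    (h1 : a * m = m * a) (h2 : b * m = m * b) :
    (a * b) * m = m * (a * b) := by
  rw [mul_assoc, h2, ← mul_assoc, h1, mul_assoc]

lemma reverse_ofFn {α : Type*} {n : ℕ} (f : Fin n → α) :
    (List.ofFn f).reverse = List.ofFn (fun k : Fin n => f k.rev) := by
  apply List.ext_getElem
  · simp
  intro m h1 h2
  rw [List.getElem_reverse, List.getElem_ofFn, List.getElem_ofFn]
  congr 1
  apply Fin.ext
  simp only [Fin.val_rev, List.length_ofFn] at *
  omega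

section Grid
variable {N D : ℕ} [NeZero N]

lemma snd_ne' {α β : Type*} {a c : α} {b d : β} (h : b ≠ d) : (a, b) ≠ (c, d) :=
  fun he => h (congrArg Prod.snd he)

lemma fst_ne' {α β : Type*} {a c : α} {b d : β} (h : a ≠ c) : (a, b) ≠ (c, d) :=
  fun he => h (congrArg Prod.fst he)

lemma zfun_update_inv {q q' : GIdx N D} (h : q ≠ q') :
    ∀ (s : GIdx N D → Fin 2) (b : Fin 2),
      zfun (Function.update s q' b q) = zfun (s q) := by
  intro s b
  rw [Function.update_of_ne h]

/-- a diagonal `Z`-type operator at site `q` commutes with `UTtcPair j'` as soon as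
`q` is not in the Hadamard column `j'.succ`. -/
lemma zdiag_comm_UTtcPair (q : GIdx N D) (j' : Fin D) (h : q.2 ≠ j'.succ) :
    (Matrix.diagonal fun s : GIdx N D → Fin 2 => zfun (s q)) * UTtcPair j'
      = UTtcPair j' * Matrix.diagonal fun s : GIdx N D → Fin 2 => zfun (s q) := by
  have hne : ∀ i' : Fin N, q ≠ ((i', j'.succ) : GIdx N D) := by
    intro i' he
    exact h (congrArg Prod.snd he)
  have cA : Commute (Matrix.diagonal fun s : GIdx N D → Fin 2 => zfun (s q))
      (TtcCol (N := N) (D := D) j'.succ) := by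
    rw [TtcCol]
    refine Commute.list_prod_right _ _ ?_
    intro x hx
    obtain ⟨i', rfl⟩ := List.mem_ofFn.mp hx
    exact diag_comm_cz2 _ _ _
  have cB : Commute (Matrix.diagonal fun s : GIdx N D → Fin 2 => zfun (s q))
      (List.ofFn fun i' : Fin N => op1 Hg ((i', j'.succ) : GIdx N D)).prod := by
    refine Commute.list_prod_right _ _ ?_
    intro x hx
    obtain ⟨i', rfl⟩ := List.mem_ofFn.mp hx
    show _ = _
    exact (op1_comm_diagonal Hg _ _ (zfun_update_inv (hne i'))).symm
  have cC : Commute (Matrix.diagonal fun s : GIdx N D → Fin 2 => zfun (s q))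
      (List.ofFn fun i' : Fin N =>
        cz2 ((i', j'.castSucc) : GIdx N D) ((i', j'.succ) : GIdx N D)).prod := by
    refine Commute.list_prod_right _ _ ?_
    intro x hx
    obtain ⟨i', rfl⟩ := List.mem_ofFn.mp hx
    exact diag_comm_cz2 _ _ _
  rw [UTtcPair]
  exact ((cA.mul_right cB).mul_right cC).eq

/-- `X` at site `q` commutes with `UTtcPair j'` as soon as `q` is in neither of the
two columns of `UTtcPair j'`. -/
lemma X_comm_UTtcPair (q : GIdx N D) (j' : Fin D) (h1 : q.2 ≠ j'.succ)
    (h2 : q.2 ≠ j'.castSucc) :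
    op1 Xg q * UTtcPair j' = UTtcPair j' * op1 Xg q := by
  have hne1 : ∀ i' : Fin N, q ≠ ((i', j'.succ) : GIdx N D) := by
    intro i' he; exact h1 (congrArg Prod.snd he)
  have hne2 : ∀ i' : Fin N, q ≠ ((i', j'.castSucc) : GIdx N D) := by
    intro i' he; exact h2 (congrArg Prod.snd he)
  have cA : Commute (op1 Xg q) (TtcCol (N := N) (D := D) j'.succ) := by
    rw [TtcCol]
    refine Commute.list_prod_right _ _ ?_
    intro x hx
    obtain ⟨i', rfl⟩ := List.mem_ofFn.mp hx
    show _ = _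
    exact op1_comm_cz2 Xg (hne1 i') (hne1 (i' + 1))
  have cB : Commute (op1 Xg q)
      (List.ofFn fun i' : Fin N => op1 Hg ((i', j'.succ) : GIdx N D)).prod := by
    refine Commute.list_prod_right _ _ ?_
    intro x hx
    obtain ⟨i', rfl⟩ := List.mem_ofFn.mp hx
    show _ = _
    exact op1Xg_comm_op1 Hg (hne1 i')
  have cC : Commute (op1 Xg q)
      (List.ofFn fun i' : Fin N =>
        cz2 ((i', j'.castSucc) : GIdx N D) ((i', j'.succ) : GIdx N D)).prod := by
    refine Commute.list_prod_right _ _ ?_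
    intro x hx
    obtain ⟨i', rfl⟩ := List.mem_ofFn.mp hx
    show _ = _
    exact op1_comm_cz2 Xg (hne2 i') (hne1 i')
  rw [UTtcPair]
  exact ((cA.mul_right cB).mul_right cC).eq

/-- The key twist: `Z_{(i,j)} Z_{(i,j+1)}` is semiconjugated to `X_{(i,j+1)}`
by the layer `UTtcPair j`. -/
lemma zz_mul_UTtcPair (i : Fin N) (j : Fin D) :
    (Matrix.diagonal fun s : GIdx N D → Fin 2 => zfun (s (i, j.castSucc))) *
      ((Matrix.diagonal fun s : GIdx N D → Fin 2 => zfun (s (i, j.succ))) * UTtcPair j)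
      = UTtcPair j * op1 Xg ((i, j.succ) : GIdx N D) := by
  have hcs : (j.castSucc : Fin (D + 1)) ≠ j.succ := by
    refine Fin.ne_of_val_ne ?_
    rw [Fin.coe_castSucc, Fin.val_succ]
    omega
  have hq12 : ((i, j.castSucc) : GIdx N D) ≠ (i, j.succ) := snd_ne' hcs
  set q1 : GIdx N D := (i, j.castSucc) with hq1def
  set q2 : GIdx N D := (i, j.succ) with hq2def
  set D1 : MatG N D := Matrix.diagonal fun s : GIdx N D → Fin 2 => zfun (s q1) with hD1
  set D2 : MatG N D := Matrix.diagonal fun s : GIdx N D → Fin 2 => zfun (s q2) with hD2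
  set X : MatG N D := op1 Xg q2 with hXdef
  -- the three layers of UTtcPair j
  set T : MatG N D := TtcCol j.succ with hT
  set Hl : MatG N D := (List.ofFn fun i' : Fin N =>
    op1 Hg ((i', j.succ) : GIdx N D)).prod with hHldef
  set Dl : MatG N D := (List.ofFn fun i' : Fin N =>
    cz2 ((i', j.castSucc) : GIdx N D) ((i', j.succ) : GIdx N D)).prod with hDldef
  have hU : UTtcPair (N := N) (D := D) j = T * Hl * Dl := rfl
  -- step 0 : D1*D2 commutes with T
  have step0 : (D1 * D2) * T = T * (D1 * D2) := by
    have c1 : D1 * T = T * D1 := by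
      rw [hT, TtcCol]
      refine Commute.list_prod_right _ _ ?_
      intro x hx
      obtain ⟨i', rfl⟩ := List.mem_ofFn.mp hx
      exact diag_comm_cz2 _ _ _
    have c2 : D2 * T = T * D2 := by
      rw [hT, TtcCol]
      refine Commute.list_prod_right _ _ ?_
      intro x hx
      obtain ⟨i', rfl⟩ := List.mem_ofFn.mp hx
      exact diag_comm_cz2 _ _ _
    exact comm_pair c1 c2
  -- D2 passes through the Hadamard layer, becoming X
  have stepH : D2 * Hl = Hl * X := by
    rw [hHldef]
    refine semiconj_ofFn_prod _ _ _ i ?_ ?_ ?_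
    · intro k hk
      have : q2 ≠ ((k, j.succ) : GIdx N D) := fst_ne' (Fin.ne_of_gt hk)
      exact (op1_comm_diagonal Hg _ _ (zfun_update_inv this)).symm
    · exact Zdiag_mul_op1Hg q2
    · intro k hk
      exact op1Xg_comm_op1 Hg (fst_ne' (Fin.ne_of_lt hk))
  -- D1 commutes with the Hadamard layer
  have stepD1H : D1 * Hl = Hl * D1 := by
    rw [hHldef]
    refine Commute.list_prod_right _ _ ?_
    intro x hx
    obtain ⟨i', rfl⟩ := List.mem_ofFn.mp hx
    show _ = _
    exact (op1_comm_diagonal Hg _ _ (zfun_update_inv (snd_ne' hcs))).symm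
  have step1 : (D1 * D2) * Hl = Hl * (D1 * X) := by
    rw [mul_assoc, stepH, ← mul_assoc, stepD1H, mul_assoc]
  -- D1 * X passes through the CZ coupling layer, becoming X
  have step2 : (D1 * X) * Dl = Dl * X := by
    rw [hDldef]
    refine semiconj_ofFn_prod _ _ _ i ?_ ?_ ?_
    · intro k hk
      have hk' : (i : Fin N) ≠ k := Fin.ne_of_gt hk
      have c1 : D1 * cz2 ((k, j.castSucc) : GIdx N D) ((k, j.succ) : GIdx N D)
          = cz2 _ _ * D1 := diag_comm_cz2 _ _ _
      have c2 : X * cz2 ((k, j.castSucc) : GIdx N D) ((k, j.succ) : GIdx N D)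
          = cz2 _ _ * X :=
        op1_comm_cz2 Xg (fst_ne' hk') (fst_ne' hk')
      exact comm_pair c1 c2
    · show (D1 * X) * cz2 q1 q2 = cz2 q1 q2 * X
      rw [mul_assoc, hXdef, op1Xg_mul_cz2 hq12, ← hD1, ← hXdef, ← mul_assoc,
        (diag_comm_cz2 _ q1 q2).eq, ← hD1, mul_assoc (cz2 q1 q2), ← mul_assoc D1,
        hD1, zdiag_sq, one_mul]
    · intro k hk
      have hk' : (i : Fin N) ≠ k := Fin.ne_of_lt hk
      exact op1_comm_cz2 Xg (fst_ne' hk') (fst_ne' hk')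
  rw [← mul_assoc, hU]
  exact conj_step (conj_step step0 step1) step2

end Grid

set_option maxHeartbeats 1000000 in
/-- the resource state built from `U_{T̃_c}` is a +1 eigenvector of
`Z_i^{(j)} Z_i^{(j+1)}` for all rows `i` and columns `j = 1,…,D`. -/
theorem ghz_resource_state_stabilizers {N D : ℕ} [NeZero N] (hN : 3 ≤ N) (hD : 1 ≤ D)
    (i : Fin N) (j : Fin D) :
    (op1 Zg ((i, j.castSucc) : GIdx N D) * op1 Zg ((i, j.succ) : GIdx N D)).mulVec
        (ghzResourceState N D) = ghzResourceState N D := by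
  classical
  have hkey : (op1 Zg ((i, j.castSucc) : GIdx N D) * op1 Zg ((i, j.succ) : GIdx N D)) *
      (List.ofFn fun j' : Fin D => UTtcPair (N := N) (D := D) j').reverse.prod
      = (List.ofFn fun j' : Fin D => UTtcPair (N := N) (D := D) j').reverse.prod *
        op1 Xg ((i, j.succ) : GIdx N D) := by
    rw [op1_Zg_eq, op1_Zg_eq, reverse_ofFn]
    refine semiconj_ofFn_prod _ _ _ j.rev ?_ ?_ ?_
    · intro k hk
      have hkD : (k : ℕ) < D := k.isLt
      have hjD : (j : ℕ) < D := j.isLt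
      have hk' : (k : ℕ) < D - ((j : ℕ) + 1) := by
        have := Fin.lt_def.mp hk
        simpa [Fin.val_rev] using this
      have hgt : (j : ℕ) < ((k.rev : Fin D) : ℕ) := by
        rw [Fin.val_rev]
        omega
      have h1 : (j.castSucc : Fin (D + 1)) ≠ (k.rev).succ :=
        Fin.ne_of_val_ne (by rw [Fin.coe_castSucc, Fin.val_succ]; omega)
      have h2 : (j.succ : Fin (D + 1)) ≠ (k.rev).succ :=
        Fin.ne_of_val_ne (by rw [Fin.val_succ, Fin.val_succ]; omega)
      exact comm_pair (zdiag_comm_UTtcPair _ _ h1) (zdiag_comm_UTtcPair _ _ h2)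
    · have h := zz_mul_UTtcPair (N := N) (D := D) i j
      rw [← mul_assoc] at h
      have hrev : j.rev.rev = j := Fin.rev_rev j
      rw [hrev]
      exact h
    · intro k hk
      have hkD : (k : ℕ) < D := k.isLt
      have hjD : (j : ℕ) < D := j.isLt
      have hk' : D - ((j : ℕ) + 1) < (k : ℕ) := by
        have := Fin.lt_def.mp hk
        simpa [Fin.val_rev] using this
      have hlt : ((k.rev : Fin D) : ℕ) < (j : ℕ) := by
        rw [Fin.val_rev]
        omega
      have h1 : (j.succ : Fin (D + 1)) ≠ (k.rev).succ :=
        Fin.ne_of_val_ne (by rw [Fin.val_succ, Fin.val_succ]; omega)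
      have h2 : (j.succ : Fin (D + 1)) ≠ (k.rev).castSucc :=
        Fin.ne_of_val_ne (by rw [Fin.val_succ, Fin.coe_castSucc]; omega)
      exact X_comm_UTtcPair _ _ h1 h2
  rw [ghzResourceState, Matrix.mulVec_mulVec, hkey, ← Matrix.mulVec_mulVec,
    op1Xg_mulVec_ketPlusAll]

end QCA

end
end
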